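/- Let H be a graph, let C be a removable cycle in H such that every vertex of C has degree at most Δ in H, and let φ be a partial proper Δ-coloring of H in which every vertex of C is uncolored. Then there exists a partial proper Δ-coloring φ' of H that colors all vertices of C and agrees with φ on V(H) \ V(C). -/

import Mathlib

open SimpleGraph

/-- `H` is a minor of `G` (branch-set definition). -/
def SimpleGraph.HasMinor {V : Type*} {W : Type*} (G : SimpleGraph V) (H : SimpleGraph W) : Prop :=
  ∃ B : W → Set V,
    (∀ w, (B w).Nonempty) ∧
    (∀ w, (G.induce (B w)).Connected) ∧
    (Pairwise fun w₁ w₂ => Disjoint (B w₁) (B w₂)) ∧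
    (∀ w₁ w₂, H.Adj w₁ w₂ → ∃ v₁ ∈ B w₁, ∃ v₂ ∈ B w₂, G.Adj v₁ v₂)

/-- Planarity via Wagner's theorem: no `K₅` minor and no `K₃,₃` minor. -/
def SimpleGraph.IsPlanar {V : Type*} (G : SimpleGraph V) : Prop :=
  ¬ G.HasMinor (completeGraph (Fin 5)) ∧
  ¬ G.HasMinor (completeBipartiteGraph (Fin 3) (Fin 3))

/-- The induced subgraph on `S` is (isomorphic to) a complete graph. -/
def SimpleGraph.InducedComplete {V : Type*} (G : SimpleGraph V) (S : Set V) : Prop :=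
  ∀ x ∈ S, ∀ y ∈ S, x ≠ y → G.Adj x y

/-- The induced subgraph on `S` is isomorphic to a cycle graph of odd length. -/
def SimpleGraph.InducedOddCycle {V : Type*} (G : SimpleGraph V) (S : Set V) : Prop :=
  ∃ n : ℕ, Odd n ∧ Nonempty ((G.induce S) ≃g cycleGraph n)

/-- A simple cycle `c` in `G` is removable if the induced graph on its vertex set is
neither isomorphic to a complete graph nor to a cycle graph of odd length. -/
def SimpleGraph.Walk.IsRemovable {V : Type*} {G : SimpleGraph V} {v : V}
    (c : G.Walk v v) : Prop :=
  ¬ G.InducedComplete {x | x ∈ c.support} ∧ ¬ G.InducedOddCycle {x | x ∈ c.support}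

open Fin.CommRing

namespace CRC

variable {V : Type*}

def Rel (G : SimpleGraph V) (S : Finset V) (x y : V) : Prop :=
  G.Adj x y ∧ x ∈ S ∧ y ∈ S

theorem rel_symm {G : SimpleGraph V} {S : Finset V} {x y : V} (h : Rel G S x y) : Rel G S y x :=
  ⟨h.1.symm, h.2.2, h.2.1⟩

theorem rtg_symm {G : SimpleGraph V} {S : Finset V} {x y : V}
    (h : Relation.ReflTransGen (Rel G S) x y) : Relation.ReflTransGen (Rel G S) y x := by
  induction h with
  | refl => exact .refl
  | tail _ h ih => exact Relation.ReflTransGen.trans (.single (rel_symm h)) ih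

theorem rtg_mono {G : SimpleGraph V} {S T : Finset V} (hST : S ⊆ T) {x y : V}
    (h : Relation.ReflTransGen (Rel G S) x y) : Relation.ReflTransGen (Rel G T) x y :=
  Relation.ReflTransGen.mono (r := Rel G S) (p := Rel G T) (fun a b hab => ⟨hab.1, hST hab.2.1, hST hab.2.2⟩) x y h

theorem chain_reach {G : SimpleGraph V} {S : Finset V} :
    ∀ (x : V) (l : List V), List.Chain G.Adj x l → (∀ y ∈ x :: l, y ∈ S) →
      ∀ b ∈ x :: l, Relation.ReflTransGen (Rel G S) x b := by
  intro x l
  induction l generalizing x with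
  | nil => intro _ _ b hb; simp at hb; subst hb; exact .refl
  | cons y t ih =>
    intro hch hmem b hb
    rcases List.chain_cons.mp hch with ⟨hxy, hch'⟩
    rcases List.mem_cons.mp hb with rfl | hb
    · exact .refl
    · have hyb : Relation.ReflTransGen (Rel G S) y b :=
        ih y hch' (fun z hz => hmem z (List.mem_cons_of_mem _ hz)) b hb
      exact Relation.ReflTransGen.head
        ⟨hxy, hmem x (List.mem_cons_self), hmem y (by simp)⟩ hyb

theorem conn_of_chain {G : SimpleGraph V} {S : Finset V} {l : List V}
    (hch : List.Chain' G.Adj l) (hsub : ∀ y ∈ l, y ∈ S) :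
    ∀ a ∈ l, ∀ b ∈ l, Relation.ReflTransGen (Rel G S) a b := by
  cases l with
  | nil => intro a ha; simp at ha
  | cons x t =>
    intro a ha b hb
    have h1 := chain_reach x t hch hsub a ha
    have h2 := chain_reach x t hch hsub b hb
    exact Relation.ReflTransGen.trans (rtg_symm h1) h2

variable [DecidableEq V]

theorem greedy (G : SimpleGraph V) [DecidableRel G.Adj] (Δ : ℕ) (A : V → Finset (Fin Δ)) :
    ∀ (l : List V), l.Nodup →
    (∀ (l₁ l₂ : List V) (x : V), l = l₁ ++ x :: l₂ →
       (l₂.filter (fun y => decide (G.Adj x y))).length < (A x).card) →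
    ∃ g : V → Option (Fin Δ),
      (∀ x ∈ l, ∃ a ∈ A x, g x = some a) ∧
      (∀ x, x ∉ l → g x = none) ∧
      (∀ x ∈ l, ∀ y ∈ l, G.Adj x y → g x ≠ g y) := by
  intro l
  induction l with
  | nil => exact fun _ _ => ⟨fun _ => none, by simp, by simp, by simp⟩
  | cons x t ih =>
    intro hnd hsplit
    obtain ⟨g, hg1, hg2, hg3⟩ := ih (List.Nodup.of_cons hnd) (fun l₁ l₂ z hz =>
      hsplit (x :: l₁) l₂ z (by rw [hz]; rfl))
    have hxt : x ∉ t := (List.nodup_cons.mp hnd).1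
    set used : Finset (Fin Δ) :=
      ((t.filter (fun y => decide (G.Adj x y))).filterMap g).toFinset with hused
    have hcard : used.card < (A x).card := by
      calc used.card ≤ ((t.filter (fun y => decide (G.Adj x y))).filterMap g).length :=
            List.toFinset_card_le _
        _ ≤ (t.filter (fun y => decide (G.Adj x y))).length := List.length_filterMap_le _ _
        _ < (A x).card := hsplit [] t x rfl
    have hne : ¬ A x ⊆ used := fun hsub => absurd (Finset.card_le_card hsub) (by omega)
    obtain ⟨a, ha⟩ := Finset.sdiff_nonempty.mpr hne
    have haA : a ∈ A x := (Finset.mem_sdiff.mp ha).1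
    have haU : a ∉ used := (Finset.mem_sdiff.mp ha).2
    have hmemused : ∀ w ∈ t, G.Adj x w → ∀ b, g w = some b → b ∈ used := by
      intro w hw hadj b hb
      rw [hused, List.mem_toFinset]
      exact List.mem_filterMap.mpr ⟨w, List.mem_filter.mpr ⟨hw, by simpa⟩, hb⟩
    refine ⟨Function.update g x (some a), ?_, ?_, ?_⟩
    · intro z hz
      rcases List.mem_cons.mp hz with rfl | hz
      · exact ⟨a, haA, Function.update_self _ _ _⟩
      · have hzx : z ≠ x := fun h => hxt (h ▸ hz)
        rw [Function.update_of_ne hzx]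
        exact hg1 z hz
    · intro z hz
      have hzx : z ≠ x := fun h => hz (h ▸ List.mem_cons_self)
      rw [Function.update_of_ne hzx]
      exact hg2 z (fun h => hz (List.mem_cons_of_mem _ h))
    · intro z hz w hw hadj
      have hupd : ∀ y, y ∈ t → Function.update g x (some a) y = g y := by
        intro y hy
        exact Function.update_of_ne (by rintro rfl; exact hxt hy) _ _
      rcases List.mem_cons.mp hz with hzx | hzt
      · rcases List.mem_cons.mp hw with hwx | hwt
        · rw [hzx, hwx] at hadj; exact absurd hadj (G.loopless.irrefl _)
        · rw [hzx] at hadj ⊢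
          rw [Function.update_self, hupd w hwt]
          rcases hgw : g w with _ | b
          · simp
          · have hbu : b ∈ used := hmemused w hwt hadj b hgw
            exact fun hcon => haU (by rw [Option.some_inj.mp hcon]; exact hbu)
      · rcases List.mem_cons.mp hw with hwx | hwt
        · rw [hwx] at hadj ⊢
          rw [hupd z hzt, Function.update_self]
          rcases hgz : g z with _ | b
          · simp
          · have hbu : b ∈ used := hmemused z hzt hadj.symm b hgz
            exact fun hcon => haU (by rw [← Option.some_inj.mp hcon]; exact hbu)
        · rw [hupd z hzt, hupd w hwt]; exact hg3 z hzt w hwt hadj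

def Good (G : SimpleGraph V) (l : List V) : Prop :=
  ∀ (l₁ l₂ : List V) (x : V), l = l₁ ++ x :: l₂ → l₁ ≠ [] → ∃ y ∈ l₁, G.Adj x y

theorem crossing {G : SimpleGraph V} {S : Finset V} {l : List V} {u0 b : V}
    (h : Relation.ReflTransGen (Rel G S) u0 b) (hu0 : u0 ∈ l) :
    b ∉ l → ∃ x ∈ S, x ∉ l ∧ ∃ y ∈ l, G.Adj x y := by
  induction h with
  | refl => exact fun hb => absurd hu0 hb
  | @tail c b' _ hrel ih =>
    intro hb
    by_cases hcl : c ∈ l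
    · exact ⟨b', hrel.2.2, hb, c, hcl, hrel.1.symm⟩
    · exact ih hcl

theorem build_order (G : SimpleGraph V) {S : Finset V} {u0 : V}
    (hconn : ∀ a ∈ S, ∀ b ∈ S, Relation.ReflTransGen (Rel G S) a b) (hu0 : u0 ∈ S) :
    ∀ (k : ℕ) (l : List V), l.Nodup → (∀ x ∈ l, x ∈ S) → u0 ∈ l → Good G l →
      S.card ≤ l.length + k →
      ∃ l', l'.Nodup ∧ l'.toFinset = S ∧ (l <+: l') ∧ Good G l' := by
  intro k
  induction k with
  | zero =>
    intro l h1 h2 _ h4 h5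
    have heq : l.toFinset = S :=
      Finset.eq_of_subset_of_card_le (fun x hx => h2 x (List.mem_toFinset.mp hx))
        (by rw [List.toFinset_card_of_nodup h1]; omega)
    exact ⟨l, h1, heq, List.prefix_refl l, h4⟩
  | succ k ih =>
    intro l h1 h2 h3 h4 h5
    by_cases hfull : S ⊆ l.toFinset
    · have heq : l.toFinset = S :=
        Finset.Subset.antisymm (fun x hx => h2 x (List.mem_toFinset.mp hx)) hfull
      exact ⟨l, h1, heq, List.prefix_refl l, h4⟩
    · obtain ⟨b, hbS, hbl⟩ := Finset.not_subset.mp hfull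
      obtain ⟨x, hxS, hxl, y, hyl, hxy⟩ :=
        crossing (hconn u0 hu0 b hbS) h3 (fun h => hbl (List.mem_toFinset.mpr h))
      have hgood : Good G (l ++ [x]) := by
        intro l₁ l₂ z hz hl₁
        rcases List.append_eq_append_iff.mp hz with ⟨a', ha1, ha2⟩ | ⟨c', hc1, hc2⟩
        · rcases a' with _ | ⟨w, a''⟩
          · obtain ⟨rfl, _⟩ : x = z ∧ [] = l₂ := by simpa using ha2
            simp only [List.append_nil] at ha1
            exact ⟨y, by rw [ha1]; exact hyl, hxy⟩
          · rw [List.cons_append] at ha2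
            obtain ⟨-, h2⟩ := List.cons_eq_cons.mp ha2
            simp at h2
        · rcases c' with _ | ⟨w, c''⟩
          · obtain ⟨rfl, rfl⟩ : z = x ∧ l₂ = [] := by simpa using hc2
            simp only [List.append_nil] at hc1
            exact ⟨y, by rw [← hc1]; exact hyl, hxy⟩
          · obtain ⟨rfl, rfl⟩ : z = w ∧ l₂ = c'' ++ [x] := by simpa using hc2
            exact h4 l₁ c'' z (by rw [hc1]) hl₁
      have := ih (l ++ [x])
        (by simp [List.nodup_append, h1, hxl]; exact fun a ha h => hxl (h ▸ ha))
        (by intro z hz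
            rcases List.mem_append.mp hz with h | h
            · exact h2 z h
            · simp at h; exact h ▸ hxS)
        (List.mem_append_left _ h3) hgood
        (by simp only [List.length_append, List.length_cons, List.length_nil]; omega)
      obtain ⟨l', hl1, hl2, hl3, hl4⟩ := this
      exact ⟨l', hl1, hl2, (List.prefix_append l [x]).trans hl3, hl4⟩

theorem lemmaA (G : SimpleGraph V) [DecidableRel G.Adj] (Δ : ℕ) (S : Finset V)
    (A : V → Finset (Fin Δ))
    (hconn : ∀ a ∈ S, ∀ b ∈ S, Relation.ReflTransGen (Rel G S) a b)
    (hdeg : ∀ u ∈ S, (S.filter (G.Adj u)).card ≤ (A u).card)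
    {u0 : V} (hu0 : u0 ∈ S) (hsur : (S.filter (G.Adj u0)).card < (A u0).card) :
    ∃ g : V → Option (Fin Δ),
      (∀ x ∈ S, ∃ a ∈ A x, g x = some a) ∧
      (∀ x, x ∉ S → g x = none) ∧
      (∀ x ∈ S, ∀ y ∈ S, G.Adj x y → g x ≠ g y) := by
  obtain ⟨l, hnd, hfin, hpre, hgood⟩ := build_order G hconn hu0 S.card [u0]
    (by simp) (by simpa using hu0) (by simp)
    (by intro l₁ l₂ x h h1
        rcases l₁ with _ | ⟨w, l₁'⟩
        · exact absurd rfl h1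
        · simp at h)
    (by simp)
  obtain ⟨t, ht⟩ := hpre
  have hsplitlen : ∀ (l₁ l₂ : List V) (x : V), l = l₁ ++ x :: l₂ →
      (l₂.filter (fun y => decide (G.Adj x y))).length < (A x).card := by
    intro l₁ l₂ x h
    have hxl : x ∈ l := by rw [h]; exact List.mem_append_right _ (List.mem_cons_self)
    have hxS : x ∈ S := hfin ▸ List.mem_toFinset.mpr hxl
    have hfl : (l.filter (fun y => decide (G.Adj x y))).length = (S.filter (G.Adj x)).card := by
      rw [← List.toFinset_card_of_nodup (hnd.filter _)]
      congr 1
      ext z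
      simp only [List.mem_toFinset, List.mem_filter, Finset.mem_filter, ← hfin,
        decide_eq_true_eq]
    rw [h, List.filter_append, List.filter_cons,
      if_neg (fun hcon => G.loopless.irrefl x (of_decide_eq_true hcon)), List.length_append] at hfl
    rcases l₁ with _ | ⟨w, l₁'⟩
    · have h2 := ht.trans h
      simp only [List.cons_append, List.nil_append, List.cons.injEq] at h2
      have hxu : x = u0 := h2.1.symm
      subst hxu
      omega
    · obtain ⟨y, hyl, hxy⟩ := hgood (w :: l₁') l₂ x h (by simp)
      have : y ∈ (w :: l₁').filter (fun y => decide (G.Adj x y)) :=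
        List.mem_filter.mpr ⟨hyl, by simpa⟩
      have hpos : 0 < ((w :: l₁').filter (fun y => decide (G.Adj x y))).length :=
        List.length_pos_iff.mpr (List.ne_nil_of_mem this)
      have := hdeg x hxS
      omega
  obtain ⟨g, hg1, hg2, hg3⟩ := greedy G Δ A l hnd hsplitlen
  have hmem : ∀ x, x ∈ l ↔ x ∈ S := fun x => by rw [← hfin, List.mem_toFinset]
  exact ⟨g, fun x hx => hg1 x ((hmem x).mpr hx), fun x hx => hg2 x (fun h => hx ((hmem x).mp h)),
    fun x hx y hy => hg3 x ((hmem x).mpr hx) y ((hmem y).mpr hy)⟩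

theorem lemmaB (G : SimpleGraph V) [DecidableRel G.Adj] (Δ : ℕ) (S : Finset V) (n : ℕ)
    [NeZero n] (hn : 3 ≤ n) (e : Fin n → V) (hinj : Function.Injective e)
    (himg : ∀ x, x ∈ S ↔ ∃ i, e i = x)
    (hadj : ∀ i : Fin n, G.Adj (e i) (e (i + 1)))
    (A : V → Finset (Fin Δ))
    (hA : ∀ u ∈ S, (S.filter (G.Adj u)).card ≤ (A u).card)
    (hnc : ¬ G.InducedComplete ↑S)
    (hno : ¬ G.InducedOddCycle ↑S) :
    ∃ g : V → Option (Fin Δ),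
      (∀ x ∈ S, ∃ a ∈ A x, g x = some a) ∧
      (∀ x, x ∉ S → g x = none) ∧
      (∀ x ∈ S, ∀ y ∈ S, G.Adj x y → g x ≠ g y) := by
  have hmemS : ∀ i, e i ∈ S := fun i => (himg (e i)).mpr ⟨i, rfl⟩
  have hadj' : ∀ i : Fin n, G.Adj (e i) (e (i - 1)) := by
    intro i
    have h := hadj (i - 1)
    have h2 : i - 1 + 1 = i := by ring
    rw [h2] at h
    exact h.symm
  have hone : ((1 : Fin n) : ℕ) = 1 := by
    rw [← Nat.cast_one, Fin.val_natCast, Nat.mod_eq_of_lt (by omega)]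
  have hsub : ∀ a b : Fin n, ((a - b : Fin n) : ℕ) = (a.val + (n - b.val)) % n := by
    intro a b; rw [Fin.sub_def]; simp [Nat.add_comm]
  have hmod : ∀ a : ℕ, a < 2*n → (a % n = if a < n then a else a - n) := by
    intro a ha; split
    · exact Nat.mod_eq_of_lt ‹_›
    · rw [Nat.mod_eq_sub_mod (by omega), Nat.mod_eq_of_lt (by omega)]
  have hsub1 : ∀ i : Fin n, ((i - 1 : Fin n) : ℕ) = if i.val = 0 then n - 1 else i.val - 1 := by
    intro i
    rw [hsub, hone, hmod _ (by have := i.isLt; omega)]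
    have := i.isLt
    split_ifs <;> omega
  have hadd1 : ∀ i : Fin n, ((i + 1 : Fin n) : ℕ) = if i.val = n - 1 then 0 else i.val + 1 := by
    intro i
    rw [Fin.add_def, hone]
    show (i.val + 1) % n = _
    rw [hmod _ (by have := i.isLt; omega)]
    have := i.isLt
    split_ifs <;> omega
  have hdecomp : ∀ i j : Fin n, i + (((j - i : Fin n) : ℕ) : Fin n) = j := by
    intro i j; rw [Fin.cast_val_eq_self]; ring
  have heqiff : ∀ i j : Fin n, j = i ↔ ((j - i : Fin n) : ℕ) = 0 := by
    intro i j
    constructor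
    · rintro rfl; simp
    · intro h
      have : j - i = 0 := Fin.ext (by simpa using h)
      have := sub_eq_zero.mp this
      exact this
  have hp1iff : ∀ i j : Fin n, j = i + 1 ↔ ((j - i : Fin n) : ℕ) = 1 := by
    intro i j
    constructor
    · rintro rfl; rw [add_sub_cancel_left, hone]
    · intro h
      have h2 : j - i = 1 := Fin.ext (by rw [h, hone])
      rw [sub_eq_iff_eq_add] at h2
      rw [h2, add_comm]
  have hneg1 : ((-1 : Fin n) : ℕ) = n - 1 := by
    have : (-1 : Fin n) = 0 - 1 := by ring
    rw [this, hsub1]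
    simp
  have hm1iff : ∀ i j : Fin n, j = i - 1 ↔ ((j - i : Fin n) : ℕ) = n - 1 := by
    intro i j
    constructor
    · rintro rfl
      have : i - 1 - i = -1 := by ring
      rw [this, hneg1]
    · intro h
      have h2 : j - i = -1 := Fin.ext (by rw [h, hneg1])
      rw [sub_eq_iff_eq_add] at h2
      rw [h2]; ring
  -- arcs
  set arc : Fin n → ℕ → List V := fun a m => (List.range m).map (fun (k : ℕ) => e (a + (k : Fin n))) with harc
  have harc_chain : ∀ (a : Fin n) (m : ℕ), (arc a m).Chain' G.Adj := by
    intro a m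
    rw [harc]
    show List.IsChain G.Adj (List.map _ (List.range m))
    rw [List.isChain_map]
    cases m with
    | zero => simp
    | succ m' =>
      rw [List.isChain_range_succ]
      intro k hk
      have hcast : a + ((k+1 : ℕ) : Fin n) = a + (k : Fin n) + 1 := by push_cast; ring
      rw [hcast]
      exact hadj _
  have harc_memS : ∀ (a : Fin n) (m : ℕ), ∀ x ∈ arc a m, x ∈ S := by
    intro a m x hx
    simp only [harc, List.mem_map] at hx
    obtain ⟨k, _, rfl⟩ := hx
    exact hmemS _
  have harc_e : ∀ (a : Fin n) (m : ℕ), m ≤ n → ∀ j : Fin n,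
      (e j ∈ arc a m ↔ ((j - a : Fin n) : ℕ) < m) := by
    intro a m hm j
    constructor
    · intro h
      simp only [harc, List.mem_map, List.mem_range] at h
      obtain ⟨k, hk, hek⟩ := h
      have heq : a + (k : Fin n) = j := hinj hek
      have : ((j - a : Fin n) : ℕ) = k := by
        rw [← heq, add_sub_cancel_left, Fin.val_natCast, Nat.mod_eq_of_lt (by omega)]
      omega
    · intro h
      simp only [harc, List.mem_map, List.mem_range]
      exact ⟨((j - a : Fin n) : ℕ), h, by rw [hdecomp]⟩
  have hconn_of_set : ∀ (T : Finset V) (a : Fin n) (m : ℕ),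
      (∀ x ∈ arc a m, x ∈ T) → ∀ x ∈ arc a m, ∀ y ∈ arc a m,
      Relation.ReflTransGen (Rel G T) x y := by
    intro T a m hsubT
    exact conn_of_chain (harc_chain a m) hsubT
  have hconnS : ∀ a ∈ S, ∀ b ∈ S, Relation.ReflTransGen (Rel G S) a b := by
    intro x hx y hy
    obtain ⟨i, rfl⟩ := (himg x).mp hx
    obtain ⟨j, rfl⟩ := (himg y).mp hy
    refine hconn_of_set S 0 n (harc_memS 0 n) _ ?_ _ ?_
    · exact (harc_e 0 n le_rfl i).mpr (by have := (i - 0 : Fin n).isLt; omega)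
    · exact (harc_e 0 n le_rfl j).mpr (by have := (j - 0 : Fin n).isLt; omega)
  have hne_pm : ∀ i : Fin n, e (i - 1) ≠ e (i + 1) := by
    intro i h
    have h2 := hinj h
    have h3 := congrArg Fin.val h2
    rw [hsub1, hadd1] at h3
    have := i.isLt
    split_ifs at h3 <;> omega
  have hd2 : ∀ i : Fin n, 2 ≤ (S.filter (G.Adj (e i))).card := by
    intro i
    have hsubpair : ({e (i-1), e (i+1)} : Finset V) ⊆ S.filter (G.Adj (e i)) := by
      intro z hz
      rcases Finset.mem_insert.mp hz with rfl | hz'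
      · exact Finset.mem_filter.mpr ⟨hmemS _, hadj' i⟩
      · rw [Finset.mem_singleton.mp hz']
        exact Finset.mem_filter.mpr ⟨hmemS _, hadj i⟩
    calc 2 = ({e (i-1), e (i+1)} : Finset V).card := (Finset.card_pair (hne_pm i)).symm
      _ ≤ _ := Finset.card_le_card hsubpair
  have hvalm1 : ∀ i j : Fin n, ((j - (i+1) : Fin n) : ℕ) =
      if ((j - i : Fin n):ℕ) = 0 then n-1 else ((j - i:Fin n):ℕ) - 1 := by
    intro i j
    have hh : j - (i+1) = (j - i) - 1 := by ring
    rw [hh, hsub1]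
  -- Case 1: a vertex with surplus
  by_cases hsurx : ∃ u0 ∈ S, (S.filter (G.Adj u0)).card < (A u0).card
  · obtain ⟨u0, hu0, hs⟩ := hsurx
    exact lemmaA G Δ S A hconnS hA hu0 hs
  push_neg at hsurx
  have heq : ∀ u ∈ S, (A u).card = (S.filter (G.Adj u)).card :=
    fun u hu => le_antisymm (hsurx u hu) (hA u hu)
  by_cases hdiff : ∃ x ∈ S, ∃ y ∈ S, G.Adj x y ∧ A x ≠ A y
  · -- Case 2a : two adjacent vertices with different lists
    have key : ∀ x, x ∈ S → ∀ y, y ∈ S → G.Adj x y → (A x \ A y).Nonempty →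
        ∃ g : V → Option (Fin Δ), (∀ z ∈ S, ∃ a ∈ A z, g z = some a) ∧
          (∀ z, z ∉ S → g z = none) ∧ (∀ z ∈ S, ∀ w ∈ S, G.Adj z w → g z ≠ g w) := by
      intro x hx y hy hxy hne
      obtain ⟨c₀, hc₀⟩ := hne
      obtain ⟨i, rfl⟩ := (himg x).mp hx
      obtain ⟨j0, rfl⟩ := (himg y).mp hy
      have hc₀x : c₀ ∈ A (e i) := (Finset.mem_sdiff.mp hc₀).1
      have hc₀y : c₀ ∉ A (e j0) := (Finset.mem_sdiff.mp hc₀).2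
      set S' := S.erase (e i) with hS'
      set A' : V → Finset (Fin Δ) := fun z => if G.Adj (e i) z then (A z).erase c₀ else A z with hA'
      have harc' : ∀ z, z ∈ S' ↔ z ∈ arc (i+1) (n-1) := by
        intro z
        constructor
        · intro hz
          obtain ⟨j, rfl⟩ := (himg z).mp (Finset.mem_of_mem_erase hz)
          have hji : j ≠ i := fun h => (Finset.ne_of_mem_erase hz) (by rw [h])
          rw [harc_e _ _ (by omega)]
          have hji' : ((j - i : Fin n) : ℕ) ≠ 0 := fun h => hji ((heqiff i j).mpr h)
          have hlt := (j - i : Fin n).isLt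
          rw [hvalm1]
          split_ifs <;> omega
        · intro hz
          have hzS := harc_memS _ _ _ hz
          obtain ⟨j, rfl⟩ := (himg z).mp hzS
          rw [harc_e _ _ (by omega)] at hz
          refine Finset.mem_erase.mpr ⟨?_, hzS⟩
          intro hej
          have h0 : ((j - i : Fin n):ℕ) = 0 := (heqiff i j).mp (hinj hej)
          rw [hvalm1] at hz
          split_ifs at hz <;> omega
      have hconn' : ∀ a ∈ S', ∀ b ∈ S', Relation.ReflTransGen (Rel G S') a b := by
        intro a ha b hb
        exact hconn_of_set S' (i+1) (n-1) (fun z hz => (harc' z).mpr hz)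
          a ((harc' a).mp ha) b ((harc' b).mp hb)
      have hfilter' : ∀ z, S'.filter (G.Adj z) = (S.filter (G.Adj z)).erase (e i) := by
        intro z
        ext w
        simp only [hS', Finset.mem_erase, Finset.mem_filter]
        tauto
      have hdeg' : ∀ z ∈ S', (S'.filter (G.Adj z)).card ≤ (A' z).card := by
        intro z hz
        rw [hfilter']
        by_cases hadjz : G.Adj (e i) z
        · have hzmem : e i ∈ S.filter (G.Adj z) := Finset.mem_filter.mpr ⟨hmemS i, hadjz.symm⟩
          rw [Finset.card_erase_of_mem hzmem]
          have h1 : (A z).card - 1 ≤ ((A z).erase c₀).card := Finset.pred_card_le_card_erase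
          have h2 := hA z (Finset.mem_of_mem_erase hz)
          simp only [hA', if_pos hadjz]
          omega
        · have hnm : e i ∉ S.filter (G.Adj z) := fun hmem => hadjz ((Finset.mem_filter.mp hmem).2.symm)
          rw [Finset.erase_eq_of_notMem hnm]
          simp only [hA', if_neg hadjz]
          exact hA z (Finset.mem_of_mem_erase hz)
      have hy' : e j0 ∈ S' := Finset.mem_erase.mpr
        ⟨fun h => G.loopless.irrefl (e i) (by rw [h] at hxy; exact hxy), hy⟩
      have hsury : (S'.filter (G.Adj (e j0))).card < (A' (e j0)).card := by
        rw [hfilter']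
        have hzmem : e i ∈ S.filter (G.Adj (e j0)) := Finset.mem_filter.mpr ⟨hmemS i, hxy.symm⟩
        rw [Finset.card_erase_of_mem hzmem]
        have hAy : A' (e j0) = A (e j0) := by
          simp only [hA', if_pos hxy, Finset.erase_eq_of_notMem hc₀y]
        rw [hAy, heq (e j0) hy]
        have hd2j := hd2 j0
        omega
      obtain ⟨g, hg1, hg2, hg3⟩ := lemmaA G Δ S' A' hconn' hdeg' hy' hsury
      refine ⟨Function.update g (e i) (some c₀), ?_, ?_, ?_⟩
      · intro z hzS
        by_cases hzi : z = e i
        · subst hzi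
          exact ⟨c₀, hc₀x, Function.update_self _ _ _⟩
        · rw [Function.update_of_ne hzi]
          obtain ⟨a, haA', hga⟩ := hg1 z (Finset.mem_erase.mpr ⟨hzi, hzS⟩)
          refine ⟨a, ?_, hga⟩
          by_cases hadjz : G.Adj (e i) z
          · simp only [hA', if_pos hadjz] at haA'
            exact Finset.mem_of_mem_erase haA'
          · simpa only [hA', if_neg hadjz] using haA'
      · intro z hzS
        have hzi : z ≠ e i := fun h => hzS (h ▸ hmemS i)
        rw [Function.update_of_ne hzi]
        exact hg2 z (fun h => hzS (Finset.mem_of_mem_erase h))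
      · intro z hzS w hwS hzw
        by_cases hzi : z = e i
        · by_cases hwi : w = e i
          · rw [hzi, hwi] at hzw
            exact absurd hzw (G.loopless.irrefl _)
          · rw [hzi] at hzw ⊢
            rw [Function.update_self, Function.update_of_ne hwi]
            obtain ⟨a, haA', hga⟩ := hg1 w (Finset.mem_erase.mpr ⟨hwi, hwS⟩)
            rw [hga]
            simp only [hA', if_pos hzw] at haA'
            intro hcon
            exact (Finset.ne_of_mem_erase haA') (Option.some_inj.mp hcon).symm
        · by_cases hwi : w = e i
          · rw [hwi] at hzw ⊢
            rw [Function.update_self, Function.update_of_ne hzi]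
            obtain ⟨a, haA', hga⟩ := hg1 z (Finset.mem_erase.mpr ⟨hzi, hzS⟩)
            rw [hga]
            simp only [hA', if_pos hzw.symm] at haA'
            intro hcon
            exact (Finset.ne_of_mem_erase haA') (Option.some_inj.mp hcon)
          · rw [Function.update_of_ne hzi, Function.update_of_ne hwi]
            exact hg3 z (Finset.mem_erase.mpr ⟨hzi, hzS⟩) w (Finset.mem_erase.mpr ⟨hwi, hwS⟩) hzw
    obtain ⟨x, hx, y, hy, hxy, hAxy⟩ := hdiff
    by_cases hss : (A x \ A y).Nonempty
    · exact key x hx y hy hxy hss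
    · rw [Finset.sdiff_nonempty, not_not] at hss
      refine key y hy x hx hxy.symm (Finset.sdiff_nonempty.mpr (fun h => hAxy ?_))
      exact Finset.Subset.antisymm hss h
  · -- Case 2b : all adjacent pairs have equal lists
    push_neg at hdiff
    have hstep : ∀ p q : V, Relation.ReflTransGen (Rel G S) p q → A p = A q := by
      intro p q h
      induction h with
      | refl => rfl
      | tail _ hr ih => rw [ih]; exact hdiff _ hr.2.1 _ hr.2.2 hr.1
    set L := A (e 0) with hL
    have hall : ∀ u ∈ S, A u = L := fun u hu => (hstep (e 0) u (hconnS _ (hmemS 0) _ hu)).symm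
    set k := L.card with hk
    have hdk : ∀ i : Fin n, (S.filter (G.Adj (e i))).card = k := by
      intro i
      rw [← heq _ (hmemS i), hall _ (hmemS i)]
    have hk2 : 2 ≤ k := (hdk 0) ▸ hd2 0
    by_cases hk2' : k = 2
    · -- the induced graph is exactly the cycle
      have hpair : ∀ i : Fin n, S.filter (G.Adj (e i)) = {e (i-1), e (i+1)} := by
        intro i
        refine (Finset.eq_of_subset_of_card_le ?_ ?_).symm
        · intro z hz
          rcases Finset.mem_insert.mp hz with rfl | hz'
          · exact Finset.mem_filter.mpr ⟨hmemS _, hadj' i⟩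
          · rw [Finset.mem_singleton.mp hz']
            exact Finset.mem_filter.mpr ⟨hmemS _, hadj i⟩
        · rw [hdk i, hk2', Finset.card_pair (hne_pm i)]
      have hadj_iff : ∀ i j : Fin n, G.Adj (e i) (e j) ↔ (j = i + 1 ∨ j = i - 1) := by
        intro i j
        constructor
        · intro h
          have hmem : e j ∈ S.filter (G.Adj (e i)) := Finset.mem_filter.mpr ⟨hmemS j, h⟩
          rw [hpair i] at hmem
          rcases Finset.mem_insert.mp hmem with h' | h'
          · exact Or.inr (hinj h')
          · exact Or.inl (hinj (Finset.mem_singleton.mp h'))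
        · rintro (rfl | rfl)
          · exact hadj i
          · exact hadj' i
      rcases Nat.even_or_odd n with hev | hodd
      · -- n even : alternate two colors
        have hn2 : n % 2 = 0 := Nat.even_iff.mp hev
        obtain ⟨a, b, hab, hLab⟩ := Finset.card_eq_two.mp (by rw [← hk, hk2'])
        set g2 : V → Option (Fin Δ) := fun z => if h : ∃ i : Fin n, e i = z then
            (if (Classical.choose h).val % 2 = 0 then some a else some b) else none with hg2def
        have hgj : ∀ j : Fin n, g2 (e j) = if j.val % 2 = 0 then some a else some b := by
          intro j
          have hex : ∃ i : Fin n, e i = e j := ⟨j, rfl⟩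
          have hch : Classical.choose hex = j := hinj (Classical.choose_spec hex)
          rw [hg2def]
          simp only [dif_pos hex, hch]
        have habL : a ∈ L ∧ b ∈ L := by rw [hLab]; simp
        refine ⟨g2, ?_, ?_, ?_⟩
        · intro z hz
          obtain ⟨j, rfl⟩ := (himg z).mp hz
          rw [hall _ hz, hgj j]
          split_ifs
          · exact ⟨a, habL.1, rfl⟩
          · exact ⟨b, habL.2, rfl⟩
        · intro z hz
          rw [hg2def]
          simp only []
          rw [dif_neg]
          rintro ⟨i, hi⟩
          exact hz (hi ▸ hmemS i)
        · intro z hzS w hwS hzw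
          obtain ⟨i, rfl⟩ := (himg z).mp hzS
          obtain ⟨j, rfl⟩ := (himg w).mp hwS
          rw [hgj i, hgj j]
          have hij := (hadj_iff i j).mp hzw
          have hpar : i.val % 2 ≠ j.val % 2 := by
            have hi := i.isLt
            rcases hij with rfl | rfl
            · rw [hadd1 i]
              split_ifs <;> omega
            · rw [hsub1 i]
              split_ifs <;> omega
          split_ifs with h1 h2 h2
          · exact absurd (h1.trans h2.symm) hpar
          · exact fun hc => hab (Option.some_inj.mp hc)
          · exact fun hc => hab (Option.some_inj.mp hc).symm
          · exact absurd (by omega : i.val % 2 = j.val % 2) hpar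
      · -- n odd : the induced graph is an odd cycle, contradiction
        exfalso
        have hbij : Function.Bijective
            (fun i : Fin n => (⟨e i, Finset.mem_coe.mpr (hmemS i)⟩ : {x // x ∈ (↑S : Set V)})) := by
          constructor
          · intro i j hij
            exact hinj (congrArg Subtype.val hij)
          · rintro ⟨z, hz⟩
            obtain ⟨i, rfl⟩ := (himg z).mp (Finset.mem_coe.mp hz)
            exact ⟨i, rfl⟩
        refine hno ⟨n, hodd, ⟨⟨(Equiv.ofBijective _ hbij).symm, @fun aa bb => ?_⟩⟩⟩
        obtain ⟨i, rfl⟩ := (Equiv.ofBijective _ hbij).surjective aa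
        obtain ⟨j, rfl⟩ := (Equiv.ofBijective _ hbij).surjective bb
        rw [Equiv.symm_apply_apply, Equiv.symm_apply_apply]
        have hiff2 : G.Adj (e i) (e j) ↔
            ((i - j : Fin n) : ℕ) = 1 ∨ ((j - i : Fin n) : ℕ) = 1 := by
          rw [hadj_iff]
          constructor
          · rintro (rfl | rfl)
            · right
              exact (hp1iff i (i+1)).mp rfl
            · left
              have hh : i = (i - 1) + 1 := by ring
              exact (hp1iff (i-1) i).mp hh
          · rintro h
            rcases h with h | h
            · right
              have h2 := (hp1iff j i).mpr h
              rw [h2]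
              ring
            · left
              exact (hp1iff i j).mpr h
        show (SimpleGraph.cycleGraph n).Adj i j ↔ _
        rw [SimpleGraph.cycleGraph_adj']
        exact ⟨fun h => hiff2.mpr h, fun h => hiff2.mp h⟩
    · -- k >= 3 : Brooks-type argument
      have hk3 : 3 ≤ k := by omega
      have hcardS : S.card = n := by
        have hSimg : S = Finset.univ.image e := by
          ext z
          simp only [Finset.mem_image, Finset.mem_univ, true_and, himg]
        rw [hSimg, Finset.card_image_of_injective _ hinj, Finset.card_univ, Fintype.card_fin]
      have hkn : k ≤ n - 1 := by
        have hsub0 : S.filter (G.Adj (e 0)) ⊆ S.erase (e 0) := by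
          intro z hz
          refine Finset.mem_erase.mpr ⟨?_, (Finset.mem_filter.mp hz).1⟩
          intro h
          rw [h] at hz
          exact G.loopless.irrefl _ (Finset.mem_filter.mp hz).2
        have h1 := Finset.card_le_card hsub0
        rw [hdk 0, Finset.card_erase_of_mem (hmemS 0), hcardS] at h1
        exact h1
      have hn4 : 4 ≤ n := by omega
      have hmem2 : ∀ (u w : V) (j : Fin n),
          (e j ∈ (S.erase u).erase w ↔ (e j ≠ u ∧ e j ≠ w)) := by
        intro u w j
        simp only [Finset.mem_erase, hmemS j, and_true]
        tauto
      have key2 : ∀ u w vm : V, u ∈ S → w ∈ S → vm ∈ S → u ≠ w → ¬G.Adj u w →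
          G.Adj vm u → G.Adj vm w →
          (∀ a ∈ (S.erase u).erase w, ∀ b ∈ (S.erase u).erase w,
            Relation.ReflTransGen (Rel G ((S.erase u).erase w)) a b) →
          ∃ g : V → Option (Fin Δ), (∀ z ∈ S, ∃ a ∈ A z, g z = some a) ∧
            (∀ z, z ∉ S → g z = none) ∧ (∀ z ∈ S, ∀ w' ∈ S, G.Adj z w' → g z ≠ g w') := by
        intro u w vm hu hw hvm huw hnadj hadj1 hadj2 hconn2
        obtain ⟨c₀, hc₀⟩ : L.Nonempty := Finset.card_pos.mp (by omega)
        set S2 := (S.erase u).erase w with hS2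
        set A2 : V → Finset (Fin Δ) := fun z => if G.Adj u z ∨ G.Adj w z then L.erase c₀ else L
          with hA2
        have hcerase : (L.erase c₀).card = k - 1 := by
          rw [Finset.card_erase_of_mem hc₀]
        have hmemS2 : ∀ z, z ∈ S2 ↔ z ∈ S ∧ z ≠ u ∧ z ≠ w := by
          intro z
          rw [hS2]
          simp only [Finset.mem_erase]
          tauto
        have hfilter2 : ∀ z, S2.filter (G.Adj z) = ((S.filter (G.Adj z)).erase u).erase w := by
          intro z
          ext t
          simp only [hS2, Finset.mem_erase, Finset.mem_filter]
          tauto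
        have hdeg2 : ∀ z ∈ S2, (S2.filter (G.Adj z)).card ≤ (A2 z).card := by
          intro z hz
          obtain ⟨hzS, hzu, hzw⟩ := (hmemS2 z).mp hz
          rw [hfilter2]
          have hdz : (S.filter (G.Adj z)).card = k := by rw [← heq z hzS, hall z hzS]
          by_cases h1 : G.Adj u z
          · have humem : u ∈ S.filter (G.Adj z) := Finset.mem_filter.mpr ⟨hu, h1.symm⟩
            have hcard1 : ((S.filter (G.Adj z)).erase u).card = k - 1 := by
              rw [Finset.card_erase_of_mem humem, hdz]
            have hle : (((S.filter (G.Adj z)).erase u).erase w).card ≤ k - 1 := by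
              calc (((S.filter (G.Adj z)).erase u).erase w).card
                  ≤ ((S.filter (G.Adj z)).erase u).card := Finset.card_erase_le
                _ = k - 1 := hcard1
            simp only [hA2, if_pos (Or.inl h1)]
            omega
          · have hrw : (S.filter (G.Adj z)).erase u = S.filter (G.Adj z) :=
              Finset.erase_eq_of_notMem (fun hm => h1 ((Finset.mem_filter.mp hm).2.symm))
            rw [hrw]
            by_cases h2 : G.Adj w z
            · rw [Finset.card_erase_of_mem (Finset.mem_filter.mpr ⟨hw, h2.symm⟩), hdz]
              simp only [hA2, if_pos (Or.inr h2)]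
              omega
            · rw [Finset.erase_eq_of_notMem (fun hm => h2 ((Finset.mem_filter.mp hm).2.symm))]
              simp only [hA2, if_neg (not_or.mpr ⟨h1, h2⟩)]
              rw [hdz, hk]
        have hvm2 : vm ∈ S2 := (hmemS2 vm).mpr
          ⟨hvm, fun h => G.loopless.irrefl u (h ▸ hadj1), fun h => G.loopless.irrefl w (h ▸ hadj2)⟩
        have hsur2 : (S2.filter (G.Adj vm)).card < (A2 vm).card := by
          rw [hfilter2]
          have humem : u ∈ S.filter (G.Adj vm) := Finset.mem_filter.mpr ⟨hu, hadj1⟩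
          have hwmem : w ∈ (S.filter (G.Adj vm)).erase u :=
            Finset.mem_erase.mpr ⟨Ne.symm huw, Finset.mem_filter.mpr ⟨hw, hadj2⟩⟩
          rw [Finset.card_erase_of_mem hwmem, Finset.card_erase_of_mem humem]
          have hdz : (S.filter (G.Adj vm)).card = k := by rw [← heq vm hvm, hall vm hvm]
          rw [hdz]
          simp only [hA2, if_pos (Or.inl hadj1.symm)]
          omega
        obtain ⟨g, hg1, hg2, hg3⟩ := lemmaA G Δ S2 A2 hconn2 hdeg2 hvm2 hsur2
        refine ⟨fun z => if z = u ∨ z = w then some c₀ else g z, ?_, ?_, ?_⟩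
        · intro z hz
          by_cases hzu : z = u ∨ z = w
          · refine ⟨c₀, ?_, by simp only [if_pos hzu]⟩
            rcases hzu with rfl | rfl
            · rw [hall z hu]; exact hc₀
            · rw [hall z hw]; exact hc₀
          · push_neg at hzu
            simp only [if_neg (not_or.mpr ⟨hzu.1, hzu.2⟩)]
            obtain ⟨a, ha, hga⟩ := hg1 z ((hmemS2 z).mpr ⟨hz, hzu.1, hzu.2⟩)
            refine ⟨a, ?_, hga⟩
            rw [hall z hz]
            simp only [hA2] at ha
            split_ifs at ha
            · exact Finset.mem_of_mem_erase ha
            · exact ha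
        · intro z hz
          have h1 : ¬(z = u ∨ z = w) := by
            rintro (rfl | rfl)
            · exact hz hu
            · exact hz hw
          simp only [if_neg h1]
          exact hg2 z (fun hm => hz ((hmemS2 z).mp hm).1)
        · intro z hzS w' hw'S hzw'
          by_cases hz1 : z = u ∨ z = w
          · by_cases hw1 : w' = u ∨ w' = w
            · exfalso
              rcases hz1 with rfl | rfl <;> rcases hw1 with rfl | rfl
              · exact G.loopless.irrefl _ hzw'
              · exact hnadj hzw'
              · exact hnadj hzw'.symm
              · exact G.loopless.irrefl _ hzw'
            · simp only [if_pos hz1, if_neg hw1]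
              push_neg at hw1
              obtain ⟨a, ha, hga⟩ := hg1 w' ((hmemS2 w').mpr ⟨hw'S, hw1.1, hw1.2⟩)
              have hcond : G.Adj u w' ∨ G.Adj w w' := by
                rcases hz1 with rfl | rfl
                · exact Or.inl hzw'
                · exact Or.inr hzw'
              simp only [hA2, if_pos hcond] at ha
              rw [hga]
              intro hcon
              exact (Finset.ne_of_mem_erase ha) (Option.some_inj.mp hcon).symm
          · by_cases hw1 : w' = u ∨ w' = w
            · simp only [if_neg hz1, if_pos hw1]
              push_neg at hz1
              obtain ⟨a, ha, hga⟩ := hg1 z ((hmemS2 z).mpr ⟨hzS, hz1.1, hz1.2⟩)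
              have hcond : G.Adj u z ∨ G.Adj w z := by
                rcases hw1 with rfl | rfl
                · exact Or.inl hzw'.symm
                · exact Or.inr hzw'.symm
              simp only [hA2, if_pos hcond] at ha
              rw [hga]
              intro hcon
              exact (Finset.ne_of_mem_erase ha) (Option.some_inj.mp hcon)
            · simp only [if_neg hz1, if_neg hw1]
              push_neg at hz1 hw1
              exact hg3 z ((hmemS2 z).mpr ⟨hzS, hz1.1, hz1.2⟩)
                w' ((hmemS2 w').mpr ⟨hw'S, hw1.1, hw1.2⟩) hzw'
      by_cases hOptA : ∃ i : Fin n, ¬ G.Adj (e (i-1)) (e (i+1))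
      · obtain ⟨i, hna⟩ := hOptA
        have hvalm2 : ∀ j : Fin n, ((j - (i+2) : Fin n) : ℕ) =
            if ((j - (i+1) : Fin n):ℕ) = 0 then n-1 else ((j - (i+1) : Fin n):ℕ) - 1 := by
          intro j
          have hh : j - (i+2) = (j - (i+1)) - 1 := by ring
          rw [hh, hsub1]
        have hne1iff : ∀ j : Fin n, e j ≠ e (i+1) ↔ ((j - i : Fin n):ℕ) ≠ 1 := by
          intro j
          constructor
          · intro h hc
            exact h (congrArg e ((hp1iff i j).mpr hc))
          · intro h hc
            exact h ((hp1iff i j).mp (hinj hc))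
        have hnem1iff : ∀ j : Fin n, e j ≠ e (i-1) ↔ ((j - i : Fin n):ℕ) ≠ n-1 := by
          intro j
          constructor
          · intro h hc
            exact h (congrArg e ((hm1iff i j).mpr hc))
          · intro h hc
            exact h ((hm1iff i j).mp (hinj hc))
        have hS2c : ∀ j : Fin n, (e j ∈ (S.erase (e (i-1))).erase (e (i+1)) ↔
            (((j - i : Fin n):ℕ) ≠ n-1 ∧ ((j - i : Fin n):ℕ) ≠ 1)) := by
          intro j
          rw [hmem2, hnem1iff, hne1iff]
        have harcA : ∀ j : Fin n, (e j ∈ arc (i+2) (n-3) ↔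
            (((j - i : Fin n):ℕ) ≠ 0 ∧ ((j - i : Fin n):ℕ) ≠ 1 ∧
             ((j - i : Fin n):ℕ) ≠ n-1)) := by
          intro j
          rw [harc_e _ _ (by omega), hvalm2 j, hvalm1 i j]
          have h1 := (j - i : Fin n).isLt
          split_ifs <;> omega
        have harcsub : ∀ z ∈ arc (i+2) (n-3), z ∈ (S.erase (e (i-1))).erase (e (i+1)) := by
          intro z hz
          obtain ⟨j, rfl⟩ := (himg z).mp (harc_memS _ _ _ hz)
          rw [harcA] at hz
          exact (hS2c j).mpr ⟨hz.2.2, hz.2.1⟩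
        have hchord : ∃ jz : Fin n, G.Adj (e i) (e jz) ∧ ((jz - i : Fin n):ℕ) ≠ 0 ∧
            ((jz - i : Fin n):ℕ) ≠ 1 ∧ ((jz - i : Fin n):ℕ) ≠ n-1 := by
          have hcard2 : ((S.filter (G.Adj (e i))) \ {e (i-1), e (i+1)}).Nonempty := by
            rw [← Finset.card_pos]
            have h1 : ({e (i-1), e (i+1)} : Finset V).card ≤ 2 :=
              (Finset.card_insert_le _ _).trans (by simp)
            have h2 := Finset.le_card_sdiff ({e (i-1), e (i+1)} : Finset V)
              (S.filter (G.Adj (e i)))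
            rw [hdk i] at h2
            omega
          obtain ⟨z, hz⟩ := hcard2
          rw [Finset.mem_sdiff] at hz
          obtain ⟨hz1, hz2⟩ := hz
          obtain ⟨jz, rfl⟩ := (himg z).mp (Finset.mem_filter.mp hz1).1
          have hadjz := (Finset.mem_filter.mp hz1).2
          simp only [Finset.mem_insert, Finset.mem_singleton, not_or] at hz2
          refine ⟨jz, hadjz, ?_, ?_, ?_⟩
          · intro hc
            have hji : jz = i := (heqiff i jz).mpr hc
            rw [hji] at hadjz
            exact G.loopless.irrefl _ hadjz
          · exact (hne1iff jz).mp hz2.2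
          · exact (hnem1iff jz).mp hz2.1
        obtain ⟨jz, hadjz, hjz0, hjz1, hjzm⟩ := hchord
        have heiS2 : e i ∈ (S.erase (e (i-1))).erase (e (i+1)) := by
          rw [hS2c i, sub_self, Fin.val_zero]
          omega
        have hjzarc : e jz ∈ arc (i+2) (n-3) := (harcA jz).mpr ⟨hjz0, hjz1, hjzm⟩
        have hjzS2 := harcsub _ hjzarc
        have hconnA : ∀ a ∈ (S.erase (e (i-1))).erase (e (i+1)),
            ∀ b ∈ (S.erase (e (i-1))).erase (e (i+1)),
            Relation.ReflTransGen (Rel G ((S.erase (e (i-1))).erase (e (i+1)))) a b := by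
          have hub : ∀ b ∈ (S.erase (e (i-1))).erase (e (i+1)),
              Relation.ReflTransGen (Rel G ((S.erase (e (i-1))).erase (e (i+1)))) (e jz) b := by
            intro b hb
            obtain ⟨j, rfl⟩ := (himg b).mp
              (Finset.mem_of_mem_erase (Finset.mem_of_mem_erase hb))
            by_cases hji : ((j - i : Fin n):ℕ) = 0
            · have hji2 : j = i := (heqiff i j).mpr hji
              rw [hji2]
              exact Relation.ReflTransGen.single ⟨hadjz.symm, hjzS2, heiS2⟩
            · have hbarc : e j ∈ arc (i+2) (n-3) :=
                (harcA j).mpr ⟨hji, ((hS2c j).mp hb).2, ((hS2c j).mp hb).1⟩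
              exact hconn_of_set _ (i+2) (n-3) harcsub _ hjzarc _ hbarc
          intro a ha b hb
          exact (rtg_symm (hub a ha)).trans (hub b hb)
        exact key2 (e (i-1)) (e (i+1)) (e i) (hmemS _) (hmemS _) (hmemS _)
          (hne_pm i) hna (hadj' i) (hadj i) hconnA
      · push_neg at hOptA
        have hfind : ∃ p, p ∈ S ∧ ∃ q, q ∈ S ∧ ∃ r, r ∈ S ∧ G.Adj r p ∧ G.Adj r q ∧
            p ≠ q ∧ ¬G.Adj p q := by
          by_contra hcon
          push_neg at hcon
          apply hnc
          have htrans : ∀ p q : V, Relation.ReflTransGen (Rel G S) p q → p ∈ S →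
              (p = q ∨ G.Adj p q) := by
            intro p q h hp
            induction h with
            | refl => exact Or.inl rfl
            | @tail c q' hst hr ih =>
              rcases ih with rfl | hadj0
              · exact Or.inr hr.1
              · by_cases hpq : p = q'
                · exact Or.inl hpq
                · exact Or.inr (hcon p hp q' hr.2.2 c hr.2.1 hadj0.symm hr.1 hpq)
          intro x hx y hy hxy
          have hx' : x ∈ S := Finset.mem_coe.mp hx
          have hy' : y ∈ S := Finset.mem_coe.mp hy
          rcases htrans x y (hconnS x hx' y hy') hx' with rfl | h
          · exact absurd rfl hxy
          · exact h
        obtain ⟨p, hp, q, hq, r, hr, hrp, hrq, hpq, hnadjpq⟩ := hfind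
        obtain ⟨ip, rfl⟩ := (himg p).mp hp
        obtain ⟨iq, rfl⟩ := (himg q).mp hq
        set δw := ((iq - ip : Fin n) : ℕ) with hδw
        have hδlt : δw < n := (iq - ip : Fin n).isLt
        have hδ0 : δw ≠ 0 := fun h => hpq (congrArg e ((heqiff ip iq).mpr h)).symm
        have hδ1 : δw ≠ 1 := by
          intro h
          have h2 : iq = ip + 1 := (hp1iff ip iq).mpr h
          exact hnadjpq (by rw [h2]; exact hadj ip)
        have hδm : δw ≠ n-1 := by
          intro h
          have h2 : iq = ip - 1 := (hm1iff ip iq).mpr h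
          exact hnadjpq (by rw [h2]; exact hadj' ip)
        have hjiq : ∀ j : Fin n, (j = iq ↔ ((j - ip:Fin n):ℕ) = δw) := by
          intro j
          constructor
          · rintro rfl
            exact hδw.symm
          · intro h
            have h2 : j - ip = iq - ip := Fin.ext (by rw [h, hδw])
            calc j = (j - ip) + ip := by ring
              _ = (iq - ip) + ip := by rw [h2]
              _ = iq := by ring
        have hγ : ∀ j : Fin n, ((j - iq : Fin n) : ℕ) =
            (((j - ip : Fin n) : ℕ) + (n - δw)) % n := by
          intro j
          have hh : j - iq = (j - ip) - (iq - ip) := by ring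
          rw [hh, hsub, ← hδw]
        have hP1mem : ∀ j : Fin n, (e j ∈ arc (ip+1) (δw - 1) ↔
            (1 ≤ ((j - ip:Fin n):ℕ) ∧ ((j - ip:Fin n):ℕ) ≤ δw - 1)) := by
          intro j
          rw [harc_e _ _ (by omega), hvalm1 ip j]
          have h1 := (j - ip : Fin n).isLt
          split_ifs <;> omega
        have hP2mem : ∀ j : Fin n, (e j ∈ arc (iq+1) (n - δw - 1) ↔
            (δw + 1 ≤ ((j - ip:Fin n):ℕ))) := by
          intro j
          rw [harc_e _ _ (by omega), hvalm1 iq j, hγ j]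
          have h1 := (j - ip : Fin n).isLt
          rw [hmod _ (by omega)]
          split_ifs <;> omega
        have hS2c : ∀ j : Fin n, (e j ∈ (S.erase (e ip)).erase (e iq) ↔
            (((j - ip:Fin n):ℕ) ≠ 0 ∧ ((j - ip:Fin n):ℕ) ≠ δw)) := by
          intro j
          rw [hmem2]
          constructor
          · rintro ⟨h1, h2⟩
            exact ⟨fun hc => h1 (congrArg e ((heqiff ip j).mpr hc)),
                   fun hc => h2 (congrArg e ((hjiq j).mpr hc))⟩
          · rintro ⟨h1, h2⟩
            exact ⟨fun hc => h1 ((heqiff ip j).mp (hinj hc)),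
                   fun hc => h2 ((hjiq j).mp (hinj hc))⟩
        have hP1sub : ∀ z ∈ arc (ip+1) (δw - 1), z ∈ (S.erase (e ip)).erase (e iq) := by
          intro z hz
          obtain ⟨j, rfl⟩ := (himg z).mp (harc_memS _ _ _ hz)
          rw [hP1mem] at hz
          rw [hS2c]
          omega
        have hP2sub : ∀ z ∈ arc (iq+1) (n - δw - 1), z ∈ (S.erase (e ip)).erase (e iq) := by
          intro z hz
          obtain ⟨j, rfl⟩ := (himg z).mp (harc_memS _ _ _ hz)
          rw [hP2mem] at hz
          rw [hS2c]
          have h1 := (j - ip : Fin n).isLt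
          omega
        have hiqm1 : ((iq - 1 - ip : Fin n) : ℕ) = δw - 1 := by
          have hh : iq - 1 - ip = (iq - ip) - 1 := by ring
          rw [hh, hsub1, ← hδw]
          split_ifs <;> omega
        have hiqp1 : ((iq + 1 - ip : Fin n) : ℕ) = δw + 1 := by
          have hh : iq + 1 - ip = (iq - ip) + 1 := by ring
          rw [hh, hadd1, ← hδw]
          split_ifs <;> omega
        have hm1P1 : e (iq - 1) ∈ arc (ip+1) (δw - 1) := by
          rw [hP1mem, hiqm1]
          omega
        have hp1P2 : e (iq + 1) ∈ arc (iq+1) (n - δw - 1) := by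
          rw [hP2mem, hiqp1]
        have hbridge := hOptA iq
        have hconnB : ∀ a ∈ (S.erase (e ip)).erase (e iq),
            ∀ b ∈ (S.erase (e ip)).erase (e iq),
            Relation.ReflTransGen (Rel G ((S.erase (e ip)).erase (e iq))) a b := by
          have hub : ∀ b ∈ (S.erase (e ip)).erase (e iq),
              Relation.ReflTransGen (Rel G ((S.erase (e ip)).erase (e iq))) (e (iq+1)) b := by
            intro b hb
            obtain ⟨j, rfl⟩ := (himg b).mp
              (Finset.mem_of_mem_erase (Finset.mem_of_mem_erase hb))
            have hj := (hS2c j).mp hb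
            by_cases hcase : δw + 1 ≤ ((j - ip : Fin n):ℕ)
            · exact hconn_of_set _ (iq+1) (n - δw - 1) hP2sub _ hp1P2 _ ((hP2mem j).mpr hcase)
            · have hjP1 : e j ∈ arc (ip+1) (δw - 1) := by
                rw [hP1mem]
                have h1 := (j - ip : Fin n).isLt
                omega
              have h1 : Relation.ReflTransGen
                  (Rel G ((S.erase (e ip)).erase (e iq))) (e (iq - 1)) (e j) :=
                hconn_of_set _ (ip+1) (δw - 1) hP1sub _ hm1P1 _ hjP1
              exact Relation.ReflTransGen.head
                ⟨hbridge.symm, hP2sub _ hp1P2, hP1sub _ hm1P1⟩ h1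
          intro a ha b hb
          exact (rtg_symm (hub a ha)).trans (hub b hb)
        exact key2 (e ip) (e iq) r hp hq hr hpq hnadjpq hrp hrq hconnB

end CRC

/-- A removable cycle all of whose vertices have degree at most Δ and are uncolored
under a partial proper Δ-coloring can be colored, extending the coloring. -/
theorem color_removable_cycle {V : Type*} [Fintype V] (G : SimpleGraph V)
    [DecidableRel G.Adj] (Δ : ℕ) {v : V} (c : G.Walk v v) (hc : c.IsCycle)
    (hrm : c.IsRemovable)
    (hdeg : ∀ u ∈ c.support, G.degree u ≤ Δ)
    (φ : V → Option (Fin Δ))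
    (hφ : ∀ a b, G.Adj a b → φ a ≠ none → φ a ≠ φ b)
    (hunc : ∀ u ∈ c.support, φ u = none) :
    ∃ φ' : V → Option (Fin Δ),
      (∀ a b, G.Adj a b → φ' a ≠ none → φ' a ≠ φ' b) ∧
      (∀ u ∈ c.support, φ' u ≠ none) ∧
      (∀ u, u ∉ c.support → φ' u = φ u) := by
  classical
  obtain ⟨hnc, hno⟩ := hrm
  set t : List V := c.support.tail with ht
  have hnd : t.Nodup := hc.support_nodup
  set n := t.length with hn
  have hlen : c.support.length = c.length + 1 := c.length_support
  have hn3 : 3 ≤ n := by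
    have h1 := hc.three_le_length
    have h2 : t.length = c.support.length - 1 := by rw [ht, List.length_tail]
    omega
  haveI : NeZero n := ⟨by omega⟩
  have htne : t ≠ [] := by
    intro h
    have : n = 0 := by rw [hn, h]; rfl
    omega
  set S : Finset V := t.toFinset with hS
  set e : Fin n → V := fun i => t.get (Fin.cast hn i) with he
  have hinj : Function.Injective e := by
    intro i j hij
    have h2 := List.nodup_iff_injective_get.mp hnd hij
    exact Fin.ext (congrArg Fin.val h2)
  have himg : ∀ x, x ∈ S ↔ ∃ i, e i = x := by
    intro x
    rw [hS, List.mem_toFinset]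
    constructor
    · intro hx
      obtain ⟨i, hi⟩ := List.mem_iff_get.mp hx
      exact ⟨Fin.cast hn.symm i, hi⟩
    · rintro ⟨i, rfl⟩
      exact List.get_mem _ _
  have hsupcons : c.support = v :: t := c.support_eq_cons
  have hchain : List.Chain' G.Adj (v :: t) := by
    rw [← hsupcons]; exact c.isChain_adj_support
  have htlast : t.getLast htne = v := by
    have h2 : (v :: t).getLast (List.cons_ne_nil v t) = t.getLast htne := List.getLast_cons htne
    have h3 : (v :: t).getLast (List.cons_ne_nil v t) = v := by
      have h1 := c.getLast_support
      calc (v :: t).getLast (List.cons_ne_nil v t)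
          = c.support.getLast (by simp) := by congr 1; exact hsupcons.symm
        _ = v := h1
    rw [← h2, h3]
  have hgetlast : t.get ⟨n-1, by omega⟩ = v := by
    have h3 : t.get ⟨n - 1, by omega⟩ = t.getLast htne := by
      rw [List.getLast_eq_getElem]
      simp only [List.get_eq_getElem]
      all_goals (congr 1 <;> omega)
    exact h3.trans htlast
  have hchain2 : ∀ (i : ℕ) (h : i + 1 < n), G.Adj (t.get ⟨i, by omega⟩) (t.get ⟨i+1, by omega⟩) := by
    intro i h
    have h2 := List.isChain_iff_getElem.mp hchain (i+1) (by simp only [List.length_cons]; omega)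
    simpa using h2
  have hchain0 : G.Adj v (t.get ⟨0, by omega⟩) := by
    have h2 := List.isChain_iff_getElem.mp hchain 0 (by simp only [List.length_cons]; omega)
    simpa using h2
  have hone : ((1 : Fin n) : ℕ) = 1 := by
    rw [← Nat.cast_one, Fin.val_natCast, Nat.mod_eq_of_lt (by omega)]
  have hadjE : ∀ i : Fin n, G.Adj (e i) (e (i + 1)) := by
    intro i
    have hi := i.isLt
    have hval : ((i + 1 : Fin n) : ℕ) = (i.val + 1) % n := by
      rw [Fin.val_add, hone]
    by_cases hcase : i.val = n - 1
    · have h0 : ((i + 1 : Fin n) : ℕ) = 0 := by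
        rw [hval, hcase, show n - 1 + 1 = n by omega, Nat.mod_self]
      show G.Adj (t.get (Fin.cast hn i)) (t.get (Fin.cast hn (i+1)))
      have hc1 : Fin.cast hn i = ⟨n-1, by omega⟩ := Fin.ext (by simpa using hcase)
      have hc2 : Fin.cast hn (i+1) = ⟨0, by omega⟩ := Fin.ext (by simpa using h0)
      rw [hc1, hc2, hgetlast]
      exact hchain0
    · have hlt : i.val + 1 < n := by omega
      have h1 : ((i + 1 : Fin n) : ℕ) = i.val + 1 := by
        rw [hval]; exact Nat.mod_eq_of_lt hlt
      show G.Adj (t.get (Fin.cast hn i)) (t.get (Fin.cast hn (i+1)))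
      have hc1 : Fin.cast hn i = ⟨i.val, by omega⟩ := rfl
      have hc2 : Fin.cast hn (i+1) = ⟨i.val + 1, by omega⟩ := Fin.ext (by simpa using h1)
      rw [hc1, hc2]
      exact hchain2 i.val hlt
  have hsupp : ∀ x, x ∈ c.support ↔ x ∈ S := by
    intro x
    rw [hS, List.mem_toFinset, hsupcons]
    constructor
    · intro hx
      rcases List.mem_cons.mp hx with rfl | hx
      · rw [← htlast]; exact List.getLast_mem htne
      · exact hx
    · exact fun hx => List.mem_cons_of_mem _ hx
  have hset : {x | x ∈ c.support} = (↑S : Set V) := by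
    ext x
    simp only [Set.mem_setOf_eq, Finset.coe_mem, Finset.mem_coe]
    exact hsupp x
  have hnc' : ¬ G.InducedComplete ↑S := by rw [← hset]; exact hnc
  have hno' : ¬ G.InducedOddCycle ↑S := by rw [← hset]; exact hno
  set A : V → Finset (Fin Δ) := fun u => Finset.univ.filter
    (fun col => ∀ w, G.Adj u w → w ∉ S → φ w ≠ some col) with hA
  have hAcard : ∀ u ∈ S, (S.filter (G.Adj u)).card ≤ (A u).card := by
    intro u hu
    set F : Finset (Option (Fin Δ)) := (G.neighborFinset u \ S).image φ with hF
    have hsub : Finset.univ.filter (fun col : Fin Δ => ¬ (some col) ∈ F) ⊆ A u := by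
      intro col hcol
      rw [Finset.mem_filter] at hcol
      refine Finset.mem_filter.mpr ⟨Finset.mem_univ _, ?_⟩
      intro w hw hwS hcon
      refine hcol.2 (Finset.mem_image.mpr ⟨w, Finset.mem_sdiff.mpr
        ⟨(G.mem_neighborFinset u w).mpr hw, hwS⟩, ?_⟩)
      exact hcon
    have hcard1 : (Finset.univ.filter (fun col : Fin Δ => (some col) ∈ F)).card ≤ F.card := by
      apply Finset.card_le_card_of_injOn (fun col => some col)
      · exact fun col hcol => (Finset.mem_filter.mp hcol).2
      · exact fun a _ b _ h => Option.some_inj.mp h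
    have hcard2 : (Finset.univ.filter (fun col : Fin Δ => (some col) ∈ F)).card
        + (Finset.univ.filter (fun col : Fin Δ => ¬ (some col) ∈ F)).card = Δ := by
      rw [Finset.card_filter_add_card_filter_not]
      simp
    have hF1 : F.card ≤ (G.neighborFinset u \ S).card := Finset.card_image_le
    have hinter : G.neighborFinset u ∩ S = S.filter (G.Adj u) := by
      ext w
      simp only [Finset.mem_inter, Finset.mem_filter, SimpleGraph.mem_neighborFinset]
      tauto
    have hF2 : (G.neighborFinset u \ S).card + (S.filter (G.Adj u)).card = G.degree u := by
      rw [← hinter]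
      exact Finset.card_sdiff_add_card_inter _ _
    have hdegu : G.degree u ≤ Δ := hdeg u ((hsupp u).mpr hu)
    have hsubcard := Finset.card_le_card hsub
    omega
  obtain ⟨g, hg1, hg2, hg3⟩ := CRC.lemmaB G Δ S n hn3 e hinj himg hadjE A hAcard hnc' hno'
  refine ⟨fun z => if z ∈ S then g z else φ z, ?_, ?_, ?_⟩
  · intro a b hab hnone
    by_cases haS : a ∈ S
    · by_cases hbS : b ∈ S
      · simp only [if_pos haS, if_pos hbS]
        exact hg3 a haS b hbS hab
      · simp only [if_pos haS, if_neg hbS]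
        obtain ⟨α, hα, hga⟩ := hg1 a haS
        rw [hga]
        have h2 := (Finset.mem_filter.mp hα).2
        exact fun hcon => h2 b hab hbS hcon.symm
    · by_cases hbS : b ∈ S
      · simp only [if_neg haS, if_pos hbS]
        obtain ⟨α, hα, hgb⟩ := hg1 b hbS
        rw [hgb]
        have h2 := (Finset.mem_filter.mp hα).2
        exact fun hcon => h2 a hab.symm haS hcon
      · simp only [if_neg haS, if_neg hbS]
        simp only [if_neg haS] at hnone
        exact hφ a b hab hnone
  · intro u hu
    have huS := (hsupp u).mp hu
    simp only [if_pos huS]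
    obtain ⟨α, hα, hgu⟩ := hg1 u huS
    rw [hgu]
    exact Option.some_ne_none α
  · intro u hu
    simp only [if_neg (fun h => hu ((hsupp u).mpr h))]
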